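/- arXiv:2008.07967 — 4 statements merged into one kernel-verified Lean document; each statement's English description precedes it below -/
import Mathlib

section
/- If Ŝ is a connected subset of vertices of the (r × q) grid graph that separates corner (1,1) from corner (r,1) and also separates corner (1,q) from corner (r,q), then |Ŝ| ≥ q. -/
open SimpleGraph

/-- The `(r × q)` grid graph on vertex set `Fin r × Fin q`:
`(i₁,j₁)` is adjacent to `(i₂,j₂)` iff `|i₁−i₂| + |j₁−j₂| = 1`. -/
def gridGraph (r q : ℕ) : SimpleGraph (Fin r × Fin q) where
  Adj u v := Nat.dist u.1.val v.1.val + Nat.dist u.2.val v.2.val = 1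
  symm := by
    constructor
    intro u v h
    rw [Nat.dist_comm u.1.val, Nat.dist_comm u.2.val] at h
    exact h
  loopless := by
    constructor
    intro u h
    simp [Nat.dist_self] at h

/-- `S` separates `u` from `v` in `G`: every walk from `u` to `v` meets `S`. -/
def Separates {V : Type*} (G : SimpleGraph V) (S : Set V) (u v : V) : Prop :=
  ∀ p : G.Walk u v, ∃ x ∈ p.support, x ∈ S

/-- `ψ` witnesses that `G` is contractible to `H`: `ψ` is onto, every fiber induces a
(nonempty) connected subgraph, and adjacency in `H` corresponds exactly to existence
of an edge of `G` between the fibers. -/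
def IsContractionMap {V W : Type*} (G : SimpleGraph V) (H : SimpleGraph W)
    (ψ : V → W) : Prop :=
  Function.Surjective ψ ∧
  (∀ w : W, (G.induce (ψ ⁻¹' {w})).Connected) ∧
  (∀ w w' : W, H.Adj w w' ↔ ∃ u v : V, ψ u = w ∧ ψ v = w' ∧ G.Adj u v)

/-- The number of edge contractions used by a contraction map: `∑_w (|ψ⁻¹(w)| − 1)`. -/
noncomputable def contractionCost {V W : Type*} [Fintype W] (ψ : V → W) : ℕ :=
  ∑ w : W, ((ψ ⁻¹' {w}).ncard - 1)

/-- Two vertex sets are adjacent if there is an edge with one endpoint in each. -/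
def SetAdj {V : Type*} (G : SimpleGraph V) (X Y : Set V) : Prop :=
  ∃ x ∈ X, ∃ y ∈ Y, G.Adj x y

/-- The (external) neighborhood of a vertex set. -/
def extNbhd {V : Type*} (G : SimpleGraph V) (X : Set V) : Set V :=
  {v | v ∉ X ∧ ∃ x ∈ X, G.Adj x v}

/-- The set of vertices of `G` lying in connected component `c` of `G − S`. -/
def compSupp {V : Type*} (G : SimpleGraph V) (S : Set V)
    (c : (G.induce Sᶜ).ConnectedComponent) : Set V :=
  {v : V | ∃ h : v ∈ Sᶜ, (G.induce Sᶜ).connectedComponentMk ⟨v, h⟩ = c}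


lemma colWalk (r q : ℕ) (hr : 0 < r) (j : Fin q) (i : ℕ) (hi : i < r) :
    ∃ p : (gridGraph r q).Walk (⟨0, hr⟩, j) (⟨i, hi⟩, j),
      ∀ v ∈ p.support, v.2 = j := by
  induction i with
  | zero => exact ⟨Walk.nil, by simp⟩
  | succ i ih =>
    obtain ⟨p, hp⟩ := ih (by omega)
    have hadj : (gridGraph r q).Adj (⟨i, by omega⟩, j) (⟨i + 1, hi⟩, j) := by
      simp [gridGraph, Nat.dist]
    refine ⟨p.concat hadj, ?_⟩
    intro v hv
    rw [Walk.support_concat, List.mem_append] at hv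
    rcases hv with hv | hv
    · exact hp v hv
    · simp at hv; simp [hv]

lemma walk_ivt {V : Type*} {G : SimpleGraph V} (f : V → ℕ)
    (hf : ∀ u v, G.Adj u v → Nat.dist (f u) (f v) ≤ 1) {a b : V}
    (p : G.Walk a b) (j : ℕ) (h1 : f a ≤ j) (h2 : j ≤ f b) :
    ∃ x ∈ p.support, f x = j := by
  induction p with
  | nil =>
    rename_i u
    exact ⟨u, by simp, by omega⟩
  | cons h q ih =>
    rename_i u v w
    by_cases hj : f u = j
    · exact ⟨u, by simp, hj⟩
    · have := hf u v h
      have h1' : f v ≤ j := by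
        unfold Nat.dist at this
        omega
      obtain ⟨x, hx, hfx⟩ := ih h1' h2
      exact ⟨x, by simp [hx], hfx⟩

/-- a connected subset of the `(r × q)` grid separating corner `(1,1)`
from `(r,1)` and corner `(1,q)` from `(r,q)` has at least `q` vertices. -/
theorem grid_corner_separator_card (r q : ℕ) (hr : 0 < r) (hq : 0 < q)
    (S : Set (Fin r × Fin q))
    (hconn : ((gridGraph r q).induce S).Connected)
    (hsep1 : Separates (gridGraph r q) S (⟨0, hr⟩, ⟨0, hq⟩)
      (⟨r - 1, by omega⟩, ⟨0, hq⟩))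
    (hsep2 : Separates (gridGraph r q) S (⟨0, hr⟩, ⟨q - 1, by omega⟩)
      (⟨r - 1, by omega⟩, ⟨q - 1, by omega⟩)) :
    q ≤ S.ncard := by

  obtain ⟨pa, hpa⟩ := colWalk r q hr ⟨0, hq⟩ (r - 1) (by omega)
  obtain ⟨x, hxp, hxS⟩ := hsep1 pa
  have hx2 := hpa x hxp
  obtain ⟨pb, hpb⟩ := colWalk r q hr ⟨q - 1, by omega⟩ (r - 1) (by omega)
  obtain ⟨y, hyp, hyS⟩ := hsep2 pb
  have hy2 := hpb y hyp
  obtain ⟨w⟩ := hconn.preconnected ⟨x, hxS⟩ ⟨y, hyS⟩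
  have hcols : ∀ j : Fin q, ∃ s ∈ S, s.2 = j := by
    intro j
    have hf : ∀ u v : ↥S, ((gridGraph r q).induce S).Adj u v →
        Nat.dist (u : Fin r × Fin q).2.val (v : Fin r × Fin q).2.val ≤ 1 := by
      intro u v h
      have h' : Nat.dist (u : Fin r × Fin q).1.val (v : Fin r × Fin q).1.val +
          Nat.dist (u : Fin r × Fin q).2.val (v : Fin r × Fin q).2.val = 1 := h
      omega
    obtain ⟨z, hz, hzf⟩ := walk_ivt (fun v : ↥S => (v : Fin r × Fin q).2.val) hf w j.val
      (by simp [hx2]) (by simp [hy2]; omega)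
    exact ⟨z.1, z.2, Fin.ext hzf⟩
  have himg : Prod.snd '' S = Set.univ :=
    Set.eq_univ_of_forall (fun j => by
      obtain ⟨s, hs, h⟩ := hcols j; exact ⟨s, hs, h⟩)
  calc q = (Set.univ : Set (Fin q)).ncard := by simp [Set.ncard_univ]
    _ = (Prod.snd '' S).ncard := by rw [himg]
    _ ≤ S.ncard := Set.ncard_image_le S.toFinite
end

section
/- If Ŝ is a connected subset of vertices of the (r × q) grid graph of size exactly q that separates corner (1,1) from corner (r,1) and also separates (1,q) from (r,q), then Ŝ equals the set of vertices in some single row, i.e., Ŝ = {(i₀, j) : 1 ≤ j ≤ q} for some i₀. -/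
open SimpleGraph

lemma grid_adj_dist {r q : ℕ} {u v : Fin r × Fin q} (h : (gridGraph r q).Adj u v) :
    Nat.dist u.1.val v.1.val + Nat.dist u.2.val v.2.val = 1 := h

lemma col_walk (r q : ℕ) (hr : 0 < r) (c : Fin q) :
    ∀ n (h : n < r), ∃ p : (gridGraph r q).Walk (⟨0, hr⟩, c) (⟨n, h⟩, c),
      ∀ x ∈ p.support, x.2 = c := by
  intro n
  induction n with
  | zero => intro h; exact ⟨Walk.nil, by simp⟩
  | succ m ih =>
    intro h
    obtain ⟨p, hp⟩ := ih (by omega)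
    have hadj : (gridGraph r q).Adj (⟨m, by omega⟩, c) (⟨m+1, h⟩, c) := by
      show Nat.dist m (m+1) + Nat.dist c.val c.val = 1
      simp [Nat.dist]
    refine ⟨p.concat hadj, ?_⟩
    intro x hx
    simp only [Walk.support_concat, List.concat_eq_append, List.mem_append,
      List.mem_singleton] at hx
    rcases hx with h1 | h1
    · exact hp x h1
    · subst h1; rfl

lemma walk_col_ivt {r q : ℕ} {S : Set (Fin r × Fin q)} :
    ∀ {a b : ↥S} (p : ((gridGraph r q).induce S).Walk a b) (c : ℕ),
      (a : Fin r × Fin q).2.val ≤ c → c ≤ (b : Fin r × Fin q).2.val →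
      ∃ x ∈ p.support, ((x : Fin r × Fin q)).2.val = c := by
  intro a b p
  induction p with
  | @nil u => intro c h1 h2; exact ⟨u, by simp, by omega⟩
  | @cons u w v h p ih =>
    intro c h1 h2
    have hg : (gridGraph r q).Adj u.val w.val := h
    have hd := grid_adj_dist hg
    by_cases hc : (u : Fin r × Fin q).2.val = c
    · exact ⟨u, by simp, hc⟩
    · have hw : (w : Fin r × Fin q).2.val ≤ c := by
        simp [Nat.dist] at hd; omega
      obtain ⟨x, hx1, hx2⟩ := ih c hw h2
      exact ⟨x, by simp [hx1], hx2⟩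

lemma walk_row_const {r q : ℕ} {S : Set (Fin r × Fin q)}
    (hinj : ∀ x y : ↥S, (x : Fin r × Fin q).2 = (y : Fin r × Fin q).2 → x = y) :
    ∀ {a b : ↥S} (_ : ((gridGraph r q).induce S).Walk a b),
      (a : Fin r × Fin q).1 = (b : Fin r × Fin q).1 := by
  intro a b p
  induction p with
  | nil => rfl
  | @cons u w v h p ih =>
    have hg : (gridGraph r q).Adj u.val w.val := h
    have hd := grid_adj_dist hg
    have hne : u ≠ w := h.ne
    have hstep : (u : Fin r × Fin q).1 = (w : Fin r × Fin q).1 := by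
      by_cases hcol : (u : Fin r × Fin q).2.val = (w : Fin r × Fin q).2.val
      · exact absurd (hinj u w (Fin.ext hcol)) hne
      · have : Nat.dist (u : Fin r × Fin q).2.val (w : Fin r × Fin q).2.val ≠ 0 := by
          simp [Nat.dist]; omega
        have hrow : Nat.dist (u : Fin r × Fin q).1.val (w : Fin r × Fin q).1.val = 0 := by omega
        exact Fin.ext (by simp [Nat.dist] at hrow; omega)
    exact hstep.trans ih

/-- a connected subset of the `(r × q)` grid of size exactly `q`
separating corner `(1,1)` from `(r,1)` and corner `(1,q)` from `(r,q)` is the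
vertex set of a single row. -/
theorem grid_corner_separator_eq_row (r q : ℕ) (hr : 0 < r) (hq : 0 < q)
    (S : Set (Fin r × Fin q))
    (hconn : ((gridGraph r q).induce S).Connected)
    (hcard : S.ncard = q)
    (hsep1 : Separates (gridGraph r q) S (⟨0, hr⟩, ⟨0, hq⟩)
      (⟨r - 1, by omega⟩, ⟨0, hq⟩))
    (hsep2 : Separates (gridGraph r q) S (⟨0, hr⟩, ⟨q - 1, by omega⟩)
      (⟨r - 1, by omega⟩, ⟨q - 1, by omega⟩)) :
    ∃ i₀ : Fin r, S = {p : Fin r × Fin q | p.1 = i₀} := by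
  -- a vertex of S in column 0
  obtain ⟨p0, hp0⟩ := col_walk r q hr ⟨0, hq⟩ (r - 1) (by omega)
  obtain ⟨x0, hx0mem, hx0S⟩ := hsep1 p0
  have hx0c : x0.2 = ⟨0, hq⟩ := hp0 x0 hx0mem
  -- a vertex of S in column q-1
  obtain ⟨p1, hp1⟩ := col_walk r q hr ⟨q - 1, by omega⟩ (r - 1) (by omega)
  obtain ⟨x1, hx1mem, hx1S⟩ := hsep2 p1
  have hx1c : x1.2 = ⟨q - 1, by omega⟩ := hp1 x1 hx1mem
  -- the column map is surjective
  have hsurj : Function.Surjective (fun x : ↥S => (x : Fin r × Fin q).2) := by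
    intro c
    obtain ⟨w⟩ := hconn.preconnected ⟨x0, hx0S⟩ ⟨x1, hx1S⟩
    obtain ⟨x, _, hx2⟩ := walk_col_ivt w c.val
      (by simp [hx0c]) (by have := c.isLt; simp [hx1c]; omega)
    exact ⟨x, Fin.ext hx2⟩
  -- injectivity from cardinality
  have : Fintype ↥S := Fintype.ofFinite _
  have hcards : Fintype.card ↥S = q := by
    rw [← Nat.card_eq_fintype_card, Nat.card_coe_set_eq, hcard]
  have hbij : Function.Bijective (fun x : ↥S => (x : Fin r × Fin q).2) :=
    (Fintype.bijective_iff_surjective_and_card _).mpr ⟨hsurj, by simp [hcards]⟩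
  have hinj : ∀ x y : ↥S, (x : Fin r × Fin q).2 = (y : Fin r × Fin q).2 → x = y :=
    fun x y h => hbij.injective h
  refine ⟨x0.1, ?_⟩
  ext p
  simp only [Set.mem_setOf_eq]
  constructor
  · intro hp
    obtain ⟨w⟩ := hconn.preconnected ⟨p, hp⟩ ⟨x0, hx0S⟩
    exact walk_row_const hinj w
  · intro hp
    obtain ⟨x, hx⟩ := hsurj p.2
    have h1 : (x : Fin r × Fin q).1 = x0.1 := by
      obtain ⟨w⟩ := hconn.preconnected x ⟨x0, hx0S⟩
      exact walk_row_const hinj w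
    have hxp : (x : Fin r × Fin q) = p := Prod.ext (h1.trans hp.symm) hx
    rw [← hxp]; exact x.2
end

section
/- Let G be k-contractible to the (r × q) grid via ψ, and let S ⊆ V(G) with |S| = q be such that ψ restricted to S is injective, ψ(S) is a connected set in the grid, and ψ(S) separates corner (1,1) from (r,1) and corner (1,q) from (r,q) in the grid. Then ψ(S) is exactly the set of vertices of some row of the grid. -/
open SimpleGraph

lemma grid_col_walk (r q : ℕ) (hr : 0 < r) (c : Fin q) (n : ℕ) (h : n < r) :
    ∃ p : (gridGraph r q).Walk (⟨0, hr⟩, c) (⟨n, h⟩, c),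
      ∀ x ∈ p.support, x.2 = c := by
  induction n with
  | zero => exact ⟨Walk.nil, by simp⟩
  | succ n ih =>
    obtain ⟨p, hp⟩ := ih (by omega)
    have hadj : (gridGraph r q).Adj (⟨n, by omega⟩, c) (⟨n+1, h⟩, c) := by
      show Nat.dist n (n+1) + Nat.dist c.val c.val = 1
      simp [Nat.dist]
    refine ⟨p.concat hadj, ?_⟩
    intro x hx
    rw [Walk.support_concat, List.mem_append] at hx
    rcases hx with hx | hx
    · exact hp x hx
    · simp at hx; subst hx; rfl

lemma grid_walk_ivt {r q : ℕ} : ∀ {u v : Fin r × Fin q} (p : (gridGraph r q).Walk u v)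
    (m : ℕ), ((u.2.val ≤ m ∧ m ≤ v.2.val) ∨ (v.2.val ≤ m ∧ m ≤ u.2.val)) →
    ∃ x ∈ p.support, x.2.val = m := by
  intro u v p
  induction p with
  | nil =>
    rename_i w
    intro m hm; exact ⟨w, by simp, by omega⟩
  | @cons a b c h p ih =>
    intro m hm
    by_cases hma : a.2.val = m
    · exact ⟨a, by simp, hma⟩
    · have h' : Nat.dist a.1.val b.1.val + Nat.dist a.2.val b.2.val = 1 := h
      have hd2 : a.2.val - b.2.val + (b.2.val - a.2.val) ≤ 1 := by
        simp only [Nat.dist] at h'; omega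
      obtain ⟨x, hx, hxm⟩ := ih m (by omega)
      exact ⟨x, by simp [hx], hxm⟩

lemma induced_walk_fst_const {r q : ℕ} (T : Set (Fin r × Fin q))
    (hhor : ∀ x ∈ T, ∀ y ∈ T, (gridGraph r q).Adj x y → x.1 = y.1) :
    ∀ {a b : ↥T} (_ : ((gridGraph r q).induce T).Walk a b),
      (a : Fin r × Fin q).1 = (b : Fin r × Fin q).1 := by
  intro a b p
  induction p with
  | nil => rfl
  | @cons a b c h p ih =>
    have h2 : (gridGraph r q).Adj a.val b.val := h
    exact (hhor a.val a.property b.val b.property h2).trans ih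

/-- if `G` is `k`-contractible to the `(r × q)` grid via `ψ` and
`S ⊆ V(G)` has size `q`, `ψ` is injective on `S`, `ψ(S)` is connected in the grid
and separates corner `(1,1)` from `(r,1)` and `(1,q)` from `(r,q)`, then `ψ(S)` is
the vertex set of some row of the grid. -/
theorem image_is_row {V : Type*} [Fintype V] (G : SimpleGraph V)
    (r q k : ℕ) (hr : 0 < r) (hq : 0 < q) (ψ : V → Fin r × Fin q)
    (hψ : IsContractionMap G (gridGraph r q) ψ)
    (hk : contractionCost ψ ≤ k)
    (S : Set V) (hcard : S.ncard = q) (hinj : Set.InjOn ψ S)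
    (hconn : ((gridGraph r q).induce (ψ '' S)).Connected)
    (hsep1 : Separates (gridGraph r q) (ψ '' S) (⟨0, hr⟩, ⟨0, hq⟩)
      (⟨r - 1, by omega⟩, ⟨0, hq⟩))
    (hsep2 : Separates (gridGraph r q) (ψ '' S) (⟨0, hr⟩, ⟨q - 1, by omega⟩)
      (⟨r - 1, by omega⟩, ⟨q - 1, by omega⟩)) :
    ∃ i₀ : Fin r, ψ '' S = {p : Fin r × Fin q | p.1 = i₀} := by
  classical
  set T := ψ '' S with hT
  have hTcard : T.ncard = q := by rw [hT, Set.ncard_image_of_injOn hinj, hcard]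
  -- T meets column 0 and column q-1
  have hcol0 : ∃ a ∈ T, a.2 = (⟨0, hq⟩ : Fin q) := by
    obtain ⟨p, hp⟩ := grid_col_walk r q hr ⟨0, hq⟩ (r-1) (by omega)
    obtain ⟨x, hxs, hxT⟩ := hsep1 p
    exact ⟨x, hxT, hp x hxs⟩
  have hcolq : ∃ a ∈ T, a.2 = (⟨q-1, by omega⟩ : Fin q) := by
    obtain ⟨p, hp⟩ := grid_col_walk r q hr ⟨q-1, by omega⟩ (r-1) (by omega)
    obtain ⟨x, hxs, hxT⟩ := hsep2 p
    exact ⟨x, hxT, hp x hxs⟩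
  -- T meets every column
  have hallcol : ∀ j : Fin q, ∃ a ∈ T, a.2 = j := by
    obtain ⟨a, haT, ha2⟩ := hcol0
    obtain ⟨b, hbT, hb2⟩ := hcolq
    intro j
    obtain ⟨p0⟩ := hconn.preconnected ⟨a, haT⟩ ⟨b, hbT⟩
    have ha2' : a.2.val = 0 := by rw [ha2]
    have hb2' : b.2.val = q - 1 := by rw [hb2]
    have hjq := j.isLt
    obtain ⟨x, hxs, hxm⟩ := grid_walk_ivt
      (p0.map (SimpleGraph.Hom.comap (Function.Embedding.subtype _) (gridGraph r q))) j.val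
      (by left; change a.2.val ≤ j.val ∧ j.val ≤ b.2.val; omega)
    rw [Walk.support_map, List.mem_map] at hxs
    obtain ⟨y, _, rfl⟩ := hxs
    exact ⟨y.val, y.property, Fin.ext hxm⟩
  -- snd is injective on T
  have hsndinj : Set.InjOn Prod.snd T := by
    haveI : Fintype ↥T := (Set.toFinite T).fintype
    have hc : Fintype.card ↥T = q := by
      rw [← Nat.card_eq_fintype_card, Nat.card_coe_set_eq, hTcard]
    have hsurj : Function.Surjective (fun x : ↥T => x.val.2) := by
      intro j
      obtain ⟨a, haT, ha2⟩ := hallcol j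
      exact ⟨⟨a, haT⟩, ha2⟩
    have hbij := (Fintype.bijective_iff_surjective_and_card
      (fun x : ↥T => x.val.2)).2 ⟨hsurj, by simp [hc]⟩
    intro x hx y hy hxy
    have := hbij.injective (a₁ := ⟨x, hx⟩) (a₂ := ⟨y, hy⟩) hxy
    exact congrArg Subtype.val this
  -- every edge of the grid inside T is horizontal
  have hhor : ∀ x ∈ T, ∀ y ∈ T, (gridGraph r q).Adj x y → x.1 = y.1 := by
    intro x hx y hy hadj
    have h1 : Nat.dist x.1.val y.1.val + Nat.dist x.2.val y.2.val = 1 := hadj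
    have hne : x.2 ≠ y.2 := by
      intro he
      have hxy : x = y := hsndinj hx hy he
      subst hxy
      exact (gridGraph r q).loopless.irrefl x hadj
    have hne' : Nat.dist x.2.val y.2.val ≠ 0 := fun h0 =>
      hne (Fin.ext (Nat.eq_of_dist_eq_zero h0))
    have hz : Nat.dist x.1.val y.1.val = 0 := by omega
    exact Fin.ext (Nat.eq_of_dist_eq_zero hz)
  obtain ⟨a, haT, ha2⟩ := hcol0
  refine ⟨a.1, ?_⟩
  have hsub : ∀ x ∈ T, x.1 = a.1 := by
    intro x hx
    obtain ⟨p⟩ := hconn.preconnected ⟨a, haT⟩ ⟨x, hx⟩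
    exact (induced_walk_fst_const T hhor p).symm
  ext p
  constructor
  · intro hp
    exact hsub p hp
  · intro hp
    obtain ⟨t, htT, ht2⟩ := hallcol p.2
    have h1 : t.1 = a.1 := hsub t htT
    have h2 : t = p := Prod.ext (h1.trans hp.symm) ht2
    rwa [← h2]
end

section
/- If G contains a (p × t)-grid-separator S with p ≥ 2, and R is any row of G[S] other than the first or last row, then G − R has at least two connected components each containing at least k + 1 vertices. -/
open SimpleGraph

/-- The set of vertices of `G` mapped by the grid isomorphism `e` into row `i`. -/
def rowSet {V : Type*} {G : SimpleGraph V} {S : Set V} {p t : ℕ}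
    (e : G.induce S ≃g gridGraph p t) (i : Fin p) : Set V :=
  {v : V | ∃ h : v ∈ S, (e ⟨v, h⟩).1 = i}

/-- if `S` is a `(p × t)`-grid-separator of `G` (with `p ≥ 2`) and
`R` is an internal row of `G[S]`, then `G − R` has at least two connected
components each containing at least `k + 1` vertices. -/
theorem internal_row_separator {V : Type*} (G : SimpleGraph V) (k p t : ℕ)
    (hp : 2 ≤ p) (S : Set V) (e : G.induce S ≃g gridGraph p t)
    (c₁ c₂ : (G.induce Sᶜ).ConnectedComponent) (hne : c₁ ≠ c₂)
    (hall : ∀ c : (G.induce Sᶜ).ConnectedComponent, c = c₁ ∨ c = c₂)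
    (hc₁ : k + 1 ≤ (compSupp G S c₁).ncard)
    (hc₂ : k + 1 ≤ (compSupp G S c₂).ncard)
    (hN1 : extNbhd G (compSupp G S c₁) = rowSet e ⟨0, by omega⟩)
    (hN2 : extNbhd G (compSupp G S c₂) = rowSet e ⟨p - 1, by omega⟩)
    (i : Fin p) (hi0 : 0 < (i : ℕ)) (hip : (i : ℕ) + 2 ≤ p) :
    ∃ d₁ d₂ : (G.induce (rowSet e i)ᶜ).ConnectedComponent, d₁ ≠ d₂ ∧
      k + 1 ≤ (compSupp G (rowSet e i) d₁).ncard ∧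
      k + 1 ≤ (compSupp G (rowSet e i) d₂).ncard := by
  classical
  set A := compSupp G S c₁ with hA
  set B := compSupp G S c₂ with hB
  set R := rowSet e i with hR
  have hAS : A ⊆ Sᶜ := fun v hv => hv.1
  have hBS : B ⊆ Sᶜ := fun v hv => hv.1
  have hRS : R ⊆ S := fun v hv => hv.1
  have hAB : ∀ v, v ∈ A → v ∉ B := by
    rintro v ⟨h₁, e₁⟩ ⟨h₂, e₂⟩
    exact hne (e₁.symm.trans e₂)
  have hcase : ∀ v, v ∉ S → v ∈ A ∨ v ∈ B := by
    intro v hv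
    have hv' : v ∈ Sᶜ := hv
    rcases hall ((G.induce Sᶜ).connectedComponentMk ⟨v, hv'⟩) with h | h
    · exact Or.inl ⟨hv', h⟩
    · exact Or.inr ⟨hv', h⟩
  -- the "row value" function
  set val : V → ℕ := fun v => if h : v ∈ S then ((e ⟨v, h⟩).1 : ℕ)
    else if v ∈ A then 0 else p - 1 with hval
  have hvalS : ∀ v (h : v ∈ S), val v = ((e ⟨v, h⟩).1 : ℕ) := by
    intro v h; simp [hval, h]
  have hvalA : ∀ v ∈ A, val v = 0 := by
    intro v hv
    have : v ∉ S := hAS hv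
    simp [hval, this, hv]
  have hvalB : ∀ v ∈ B, val v = p - 1 := by
    intro v hv
    have h1 : v ∉ S := hBS hv
    have h2 : v ∉ A := fun h => hAB v h hv
    simp [hval, h1, h2]
  -- step lemma
  have hstep : ∀ u v, G.Adj u v → val v ≤ val u + 1 := by
    intro u v huv
    by_cases hu : u ∈ S <;> by_cases hv : v ∈ S
    · -- both in S : grid adjacency
      have hadj : (G.induce S).Adj ⟨u, hu⟩ ⟨v, hv⟩ := huv
      have hg : (gridGraph p t).Adj (e ⟨u, hu⟩) (e ⟨v, hv⟩) := e.map_adj_iff.mpr hadj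
      have : Nat.dist ((e ⟨u, hu⟩).1 : ℕ) ((e ⟨v, hv⟩).1 : ℕ) ≤ 1 := by
        have := hg; unfold gridGraph at this; simp only at this; omega
      rw [hvalS u hu, hvalS v hv]
      unfold Nat.dist at this
      omega
    · -- u ∈ S, v ∉ S
      rcases hcase v hv with h | h
      · rw [hvalA v h]; omega
      · -- v ∈ B ⇒ u ∈ extNbhd B = last row
        have hu' : u ∈ extNbhd G B := ⟨fun hc => hBS hc hu, v, h, huv.symm⟩
        rw [hN2] at hu'
        obtain ⟨hus, hrow⟩ := hu'
        rw [hvalB v h, hvalS u hu]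
        have : ((e ⟨u, hu⟩).1 : ℕ) = p - 1 := by rw [hrow]
        omega
    · -- u ∉ S, v ∈ S
      rcases hcase u hu with h | h
      · -- u ∈ A ⇒ v ∈ extNbhd A = first row
        have hv' : v ∈ extNbhd G A := ⟨fun hc => hAS hc hv, u, h, huv⟩
        rw [hN1] at hv'
        obtain ⟨hvs, hrow⟩ := hv'
        rw [hvalS v hv]
        have : ((e ⟨v, hv⟩).1 : ℕ) = 0 := by rw [hrow]
        omega
      · have hv' : v ∈ extNbhd G B := ⟨fun hc => hBS hc hv, u, h, huv⟩
        rw [hN2] at hv'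
        obtain ⟨hvs, hrow⟩ := hv'
        rw [hvalS v hv, hvalB u h]
        have : ((e ⟨v, hv⟩).1 : ℕ) = p - 1 := by rw [hrow]
        omega
    · -- both outside S
      rcases hcase u hu with h | h <;> rcases hcase v hv with h' | h'
      · rw [hvalA v h']; omega
      · -- u ∈ A, v ∈ B : impossible
        exfalso
        have hv' : v ∈ extNbhd G A := ⟨fun hc => hAB v hc h', u, h, huv⟩
        rw [hN1] at hv'
        exact hv hv'.1
      · rw [hvalA v h']; omega
      · rw [hvalB v h', hvalB u h]; omega
  -- intermediate value on walks
  have hmid : ∀ u v (w : G.Walk u v), val u ≤ (i : ℕ) → (i : ℕ) ≤ val v →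
      ∃ x ∈ w.support, val x = (i : ℕ) := by
    intro u v w
    induction w with
    | nil => intro h1 h2; exact ⟨_, by simp, le_antisymm h1 h2⟩
    | @cons a b c hadj w ih =>
      intro h1 h2
      by_cases hai : val a = (i : ℕ)
      · exact ⟨a, by simp, hai⟩
      · have hlt : val a < (i : ℕ) := lt_of_le_of_ne h1 hai
        by_cases hbi : (i : ℕ) ≤ val b
        · have hb : val b = (i : ℕ) :=
            le_antisymm (le_trans (hstep a b hadj) (by omega)) hbi
          exact ⟨b, by simp, hb⟩
        · obtain ⟨x, hx, hxi⟩ := ih (by omega) h2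
          exact ⟨x, by simp [hx], hxi⟩
  -- separation claim
  have hsep : ∀ a ∈ A, ∀ b ∈ B, ∀ w : G.Walk a b, ∃ x ∈ w.support, x ∈ R := by
    intro a ha b hb w
    obtain ⟨x, hx, hxi⟩ := hmid a b w (by rw [hvalA a ha]; omega)
      (by rw [hvalB b hb]; omega)
    refine ⟨x, hx, ?_⟩
    by_cases hxS : x ∈ S
    · refine ⟨hxS, ?_⟩
      rw [hvalS x hxS] at hxi
      exact Fin.ext hxi
    · exfalso
      rcases hcase x hxS with h | h
      · rw [hvalA x h] at hxi; omega
      · rw [hvalB x h] at hxi; omega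
  -- finiteness
  haveI hfinS : Finite ↥S := Finite.of_equiv _ e.toEquiv.symm
  have hSfin : S.Finite := Set.toFinite S
  have hAfin : A.Finite := by
    by_contra h
    rw [Set.Infinite.ncard h] at hc₁; omega
  have hBfin : B.Finite := by
    by_contra h
    rw [Set.Infinite.ncard h] at hc₂; omega
  haveI : Finite V := by
    rw [← Set.finite_univ_iff]
    refine Set.Finite.subset ((hSfin.union hAfin).union hBfin) (fun v _ => ?_)
    by_cases hv : v ∈ S
    · exact Or.inl (Or.inl hv)
    · rcases hcase v hv with h | h
      · exact Or.inl (Or.inr h)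
      · exact Or.inr h
  -- choose base points
  obtain ⟨a, ha⟩ : A.Nonempty := Set.nonempty_of_ncard_ne_zero (by omega)
  obtain ⟨b, hb⟩ : B.Nonempty := Set.nonempty_of_ncard_ne_zero (by omega)
  have haR : a ∈ Rᶜ := fun h => hAS ha (hRS h)
  have hbR : b ∈ Rᶜ := fun h => hBS hb (hRS h)
  set d₁ := (G.induce Rᶜ).connectedComponentMk ⟨a, haR⟩ with hd₁
  set d₂ := (G.induce Rᶜ).connectedComponentMk ⟨b, hbR⟩ with hd₂
  have hsub : Sᶜ ⊆ Rᶜ := Set.compl_subset_compl.mpr hRS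
  let ι : G.induce Sᶜ →g G.induce Rᶜ :=
    ⟨fun x => ⟨x.1, hsub x.2⟩, fun h => h⟩
  have hcomp : ∀ (c : (G.induce Sᶜ).ConnectedComponent)
      (z : V) (hz : z ∈ compSupp G S c) (z₀ : V) (hz₀ : z₀ ∈ compSupp G S c)
      (hz₀R : z₀ ∈ Rᶜ), z ∈ compSupp G R ((G.induce Rᶜ).connectedComponentMk ⟨z₀, hz₀R⟩) := by
    rintro c z ⟨hz, ez⟩ z₀ ⟨hz₀, ez₀⟩ hz₀R
    have hreach : (G.induce Sᶜ).Reachable ⟨z, hz⟩ ⟨z₀, hz₀⟩ :=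
      SimpleGraph.ConnectedComponent.exact (ez.trans ez₀.symm)
    have hreach' : (G.induce Rᶜ).Reachable ⟨z, hsub hz⟩ ⟨z₀, hsub hz₀⟩ :=
      hreach.map ι
    exact ⟨hsub hz, SimpleGraph.ConnectedComponent.sound hreach'⟩
  have hAsub : A ⊆ compSupp G R d₁ := fun v hv => hcomp c₁ v hv a ha haR
  have hBsub : B ⊆ compSupp G R d₂ := fun v hv => hcomp c₂ v hv b hb hbR
  refine ⟨d₁, d₂, ?_, ?_, ?_⟩
  · -- d₁ ≠ d₂
    intro hdd
    have hreach : (G.induce Rᶜ).Reachable ⟨a, haR⟩ ⟨b, hbR⟩ :=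
      SimpleGraph.ConnectedComponent.exact hdd
    obtain ⟨w⟩ := hreach
    let ιG : G.induce Rᶜ →g G := ⟨Subtype.val, fun h => h⟩
    obtain ⟨x, hx, hxR⟩ := hsep a ha b hb (w.map ιG)
    rw [SimpleGraph.Walk.support_map] at hx
    obtain ⟨y, _, rfl⟩ := List.mem_map.mp hx
    exact y.2 hxR
  · exact le_trans hc₁ (Set.ncard_le_ncard hAsub (Set.toFinite _))
  · exact le_trans hc₂ (Set.ncard_le_ncard hBsub (Set.toFinite _))
end
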